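/- arXiv:2305.10218 — 2 statements merged into one kernel-verified Lean document; each statement's English description precedes it below -/
import Mathlib

section
/- For any nonnegative function ρ ∈ L^1(ℝ³) ∩ L^{4/3}(ℝ³), the Coulomb double integral satisfies ∬_{ℝ³×ℝ³} ρ(x)ρ(y)/|x−y| dx dy ≤ C ‖ρ‖_{L¹}^{2/3} ‖ρ‖_{L^{4/3}}^{4/3} for some constant C > 0 independent of ρ. -/
open MeasureTheory Set Metric ENNReal

namespace Coulomb

noncomputable section

abbrev E3 := EuclideanSpace ℝ (Fin 3)

/-- unit ball volume -/
def v : ℝ≥0∞ := volume (ball (0:E3) 1)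

lemma v_ne_top : v ≠ ∞ := measure_ball_lt_top.ne

lemma volume_ball_eq (x : E3) {r : ℝ} (hr : 0 ≤ r) :
    volume (ball x r) = ENNReal.ofReal (r ^ (3:ℝ)) * v := by
  rw [Measure.addHaar_ball volume x hr]
  congr 1
  rw [finrank_euclideanSpace, Fintype.card_fin, ← Real.rpow_natCast]
  norm_num

/-- layer cake for the Coulomb kernel, as an inequality -/
lemma kernel_le (z : E3) :
    ENNReal.ofReal ‖z‖⁻¹ ≤
      ∫⁻ r in Ioi (0:ℝ), (Ioi ‖z‖).indicator (fun r => ENNReal.ofReal (r ^ (-2:ℝ))) r := by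
  rcases eq_or_lt_of_le (norm_nonneg z) with h | h
  · simp [← h]
  · set a := ‖z‖ with ha
    rw [lintegral_indicator measurableSet_Ioi, Measure.restrict_restrict measurableSet_Ioi,
      Set.Ioi_inter_Ioi, max_eq_left h.le,
      ← ofReal_integral_eq_lintegral_ofReal
        (integrableOn_Ioi_rpow_of_lt (by norm_num) h)
        ((ae_restrict_iff' measurableSet_Ioi).2 (Filter.Eventually.of_forall
          fun r hr => Real.rpow_nonneg (le_trans h.le (le_of_lt hr)) _)),
      integral_Ioi_rpow_of_lt (by norm_num) h]
    apply ENNReal.ofReal_le_ofReal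
    rw [show (-2:ℝ) + 1 = -1 by norm_num, Real.rpow_neg_one]
    simp

variable (f : E3 → ℝ≥0∞)

/-- local mass -/
def Phi (r : ℝ) (x : E3) : ℝ≥0∞ := ∫⁻ y, f y * (ball x r).indicator 1 y

variable {f}

lemma Phi_eq (r : ℝ) (x : E3) : Phi f r x = ∫⁻ y in ball x r, f y := by
  rw [Phi, ← lintegral_indicator measurableSet_ball]
  congr 1; funext y
  by_cases h : y ∈ ball x r <;> simp [Set.indicator_apply, h]

lemma meas_kernel (hf : Measurable f) (r : ℝ) :
    Measurable fun p : E3 × E3 => f p.2 * (ball p.1 r).indicator 1 p.2 := by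
  have hs : MeasurableSet {p : E3 × E3 | dist p.2 p.1 < r} :=
    measurableSet_lt (measurable_snd.dist measurable_fst) measurable_const
  have : (fun p : E3 × E3 => f p.2 * (ball p.1 r).indicator 1 p.2)
      = {p : E3 × E3 | dist p.2 p.1 < r}.indicator (fun p => f p.2) := by
    funext p
    by_cases h : dist p.2 p.1 < r <;>
      simp [Set.indicator_apply, h, Metric.mem_ball]
  rw [this]
  exact (hf.comp measurable_snd).indicator hs

lemma meas_Phi_prod (hf : Measurable f) :
    Measurable fun p : ℝ × E3 => Phi f p.1 p.2 := by
  have hs : MeasurableSet {q : (ℝ × E3) × E3 | dist q.2 q.1.2 < q.1.1} :=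
    measurableSet_lt (measurable_snd.dist measurable_fst.snd) measurable_fst.fst
  have heq : (fun p : ℝ × E3 => Phi f p.1 p.2)
      = fun p => ∫⁻ y, {q : (ℝ × E3) × E3 | dist q.2 q.1.2 < q.1.1}.indicator
          (fun q => f q.2) (p, y) := by
    funext p
    simp only [Phi]
    congr 1; funext y
    by_cases h : dist y p.2 < p.1 <;>
      simp [Set.indicator_apply, h, Metric.mem_ball]
  rw [heq]
  exact Measurable.lintegral_prod_right' ((hf.comp measurable_snd).indicator hs)

lemma meas_Phi (hf : Measurable f) (r : ℝ) : Measurable fun x : E3 => Phi f r x :=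
  Measurable.lintegral_prod_right' (meas_kernel hf r)

/-- Hölder bound on local mass -/
lemma Phi_le (hf : Measurable f) (r : ℝ) (x : E3) :
    Phi f r x ≤ (∫⁻ y, f y ^ ((4:ℝ)/3)) ^ ((3:ℝ)/4) * volume (ball x r) ^ ((1:ℝ)/4) := by
  have hpq : Real.HolderConjugate ((4:ℝ)/3) 4 := Real.holderConjugate_iff.2 ⟨by norm_num, by norm_num⟩
  have H := ENNReal.lintegral_mul_le_Lp_mul_Lq volume hpq hf.aemeasurable
    ((measurable_const.indicator measurableSet_ball :
      Measurable ((ball x r).indicator (1 : E3 → ℝ≥0∞)))).aemeasurable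
  calc Phi f r x = ∫⁻ a : E3, (f * (ball x r).indicator (1:E3→ℝ≥0∞)) a := rfl
    _ ≤ (∫⁻ a, f a ^ ((4:ℝ)/3)) ^ (1/((4:ℝ)/3)) *
        (∫⁻ a, (ball x r).indicator (1 : E3 → ℝ≥0∞) a ^ (4:ℝ)) ^ (1/(4:ℝ)) := H
    _ = (∫⁻ y, f y ^ ((4:ℝ)/3)) ^ ((3:ℝ)/4) * volume (ball x r) ^ ((1:ℝ)/4) := by
        have h1 : ∀ a, ((ball x r).indicator (1:E3→ℝ≥0∞) a) ^ (4:ℝ)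
            = (ball x r).indicator 1 a := fun a => by
          by_cases h : a ∈ ball x r <;> simp [Set.indicator_apply, h]
        simp_rw [h1, lintegral_indicator_one measurableSet_ball]
        norm_num

/-- total mass of Phi -/
lemma lintegral_Phi (hf : Measurable f) {r : ℝ} (hr : 0 ≤ r) :
    ∫⁻ x, Phi f r x = ENNReal.ofReal (r ^ (3:ℝ)) * v * ∫⁻ y, f y := by
  have hswap := lintegral_lintegral_swap (μ := (volume : Measure E3)) (ν := (volume : Measure E3))
    (f := fun x y => f y * (ball x r).indicator 1 y) (meas_kernel hf r).aemeasurable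
  simp only [Phi]
  calc ∫⁻ x, ∫⁻ y, f y * (ball x r).indicator 1 y
      = ∫⁻ y, ∫⁻ x, f y * (ball x r).indicator 1 y := hswap
    _ = ∫⁻ y, f y * volume (ball y r) := by
        refine lintegral_congr fun y => ?_
        have h1 : ∀ x : E3, (ball x r).indicator (1:E3→ℝ≥0∞) y
            = (ball y r).indicator (1:E3→ℝ≥0∞) x := fun x => by
          by_cases h : dist y x < r <;>
            simp [Set.indicator_apply, Metric.mem_ball, h, dist_comm]
        simp_rw [h1]
        have hm : Measurable fun x : E3 => (ball y r).indicator (1:E3→ℝ≥0∞) x :=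
          measurable_const.indicator measurableSet_ball
        rw [lintegral_const_mul _ hm, lintegral_indicator_one measurableSet_ball]
    _ = ENNReal.ofReal (r ^ (3:ℝ)) * v * ∫⁻ y, f y := by
        simp_rw [fun y : E3 => volume_ball_eq y hr]
        rw [lintegral_mul_const _ hf, mul_comm]

lemma I_le_sq (hf : Measurable f) (r : ℝ) :
    ∫⁻ x, f x * Phi f r x ≤ (∫⁻ y, f y) * ∫⁻ y, f y := by
  have h : ∀ x, f x * Phi f r x ≤ f x * ∫⁻ y, f y := fun x => by
    gcongr
    rw [Phi_eq]
    exact setLIntegral_le_lintegral _ _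
  exact le_trans (lintegral_mono h) (le_of_eq (by rw [lintegral_mul_const _ hf, mul_comm]))

lemma rpow_alg (B w A : ℝ≥0∞) :
    B ^ ((3:ℝ)/4) * (((B ^ ((3:ℝ)/4) * w ^ ((1:ℝ)/4)) ^ (3:ℝ) * (w * A)) ^ ((1:ℝ)/4))
      = B ^ ((21:ℝ)/16) * w ^ ((7:ℝ)/16) * A ^ ((1:ℝ)/4) := by
  calc B ^ ((3:ℝ)/4) * (((B ^ ((3:ℝ)/4) * w ^ ((1:ℝ)/4)) ^ (3:ℝ) * (w * A)) ^ ((1:ℝ)/4))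
      = B ^ ((3:ℝ)/4) * (((B ^ ((3:ℝ)/4) * w ^ ((1:ℝ)/4)) ^ (3:ℝ)) ^ ((1:ℝ)/4) *
          (w ^ ((1:ℝ)/4) * A ^ ((1:ℝ)/4))) := by
        rw [ENNReal.mul_rpow_of_nonneg _ _ (by norm_num : (0:ℝ) ≤ 1/4),
            ENNReal.mul_rpow_of_nonneg _ _ (by norm_num : (0:ℝ) ≤ 1/4)]
    _ = B ^ ((3:ℝ)/4) * ((B ^ ((9:ℝ)/16) * w ^ ((3:ℝ)/16)) * (w ^ ((1:ℝ)/4) * A ^ ((1:ℝ)/4))) := by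
        rw [← ENNReal.rpow_mul, ENNReal.mul_rpow_of_nonneg _ _ (by norm_num : (0:ℝ) ≤ 3 * (1/4)),
            ← ENNReal.rpow_mul, ← ENNReal.rpow_mul]
        norm_num
    _ = (B ^ ((3:ℝ)/4) * B ^ ((9:ℝ)/16)) * (w ^ ((3:ℝ)/16) * w ^ ((1:ℝ)/4)) * A ^ ((1:ℝ)/4) := by
        ring
    _ = B ^ ((21:ℝ)/16) * w ^ ((7:ℝ)/16) * A ^ ((1:ℝ)/4) := by
        rw [← ENNReal.rpow_add_of_nonneg _ _ (by norm_num : (0:ℝ) ≤ 3/4) (by norm_num : (0:ℝ) ≤ 9/16),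
            ← ENNReal.rpow_add_of_nonneg _ _ (by norm_num : (0:ℝ) ≤ 3/16) (by norm_num : (0:ℝ) ≤ 1/4)]
        norm_num

lemma I_le_pow (hf : Measurable f) {r : ℝ} (hr : 0 ≤ r) :
    ∫⁻ x, f x * Phi f r x ≤
      (∫⁻ y, f y ^ ((4:ℝ)/3)) ^ ((21:ℝ)/16) * (∫⁻ y, f y) ^ ((1:ℝ)/4) * v ^ ((7:ℝ)/16) *
        ENNReal.ofReal (r ^ ((21:ℝ)/16)) := by
  set B := ∫⁻ y, f y ^ ((4:ℝ)/3) with hB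
  set A := ∫⁻ y, f y with hA
  set w := ENNReal.ofReal (r ^ (3:ℝ)) * v with hw
  have hpq : Real.HolderConjugate ((4:ℝ)/3) 4 := Real.holderConjugate_iff.2 ⟨by norm_num, by norm_num⟩
  have hball : ∀ x : E3, volume (ball x r) = w := fun x => volume_ball_eq x hr
  -- Hölder
  have H : ∫⁻ x, f x * Phi f r x ≤ B ^ ((3:ℝ)/4) * (∫⁻ x, Phi f r x ^ (4:ℝ)) ^ ((1:ℝ)/4) := by
    have h := ENNReal.lintegral_mul_le_Lp_mul_Lq volume hpq hf.aemeasurable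
      (meas_Phi hf r).aemeasurable
    refine le_trans (le_of_eq rfl) (h.trans (le_of_eq ?_))
    norm_num
    rfl
  -- pointwise bound for the fourth power
  have hpt : ∀ x, Phi f r x ^ (4:ℝ) ≤ (B ^ ((3:ℝ)/4) * w ^ ((1:ℝ)/4)) ^ (3:ℝ) * Phi f r x := by
    intro x
    have h34 : Phi f r x ^ (4:ℝ) = Phi f r x ^ (3:ℝ) * Phi f r x ^ (1:ℝ) := by
      rw [← ENNReal.rpow_add_of_nonneg _ _ (by norm_num : (0:ℝ) ≤ 3) (by norm_num : (0:ℝ) ≤ 1)]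
      norm_num
    rw [h34, ENNReal.rpow_one]
    refine mul_le_mul_left ?_ _
    refine ENNReal.rpow_le_rpow ?_ (by norm_num)
    rw [← hball x]
    exact Phi_le hf r x
  have H4 : (∫⁻ x, Phi f r x ^ (4:ℝ)) ≤ (B ^ ((3:ℝ)/4) * w ^ ((1:ℝ)/4)) ^ (3:ℝ) * (w * A) :=
    calc (∫⁻ x, Phi f r x ^ (4:ℝ))
        ≤ ∫⁻ x, (B ^ ((3:ℝ)/4) * w ^ ((1:ℝ)/4)) ^ (3:ℝ) * Phi f r x := lintegral_mono hpt
      _ = (B ^ ((3:ℝ)/4) * w ^ ((1:ℝ)/4)) ^ (3:ℝ) * ∫⁻ x, Phi f r x :=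
          lintegral_const_mul _ (meas_Phi hf r)
      _ = (B ^ ((3:ℝ)/4) * w ^ ((1:ℝ)/4)) ^ (3:ℝ) * (w * A) := by
          rw [lintegral_Phi hf hr]
  -- combine
  have hwv : w ^ ((7:ℝ)/16) = ENNReal.ofReal (r ^ ((21:ℝ)/16)) * v ^ ((7:ℝ)/16) := by
    rw [hw, ENNReal.mul_rpow_of_nonneg _ _ (by norm_num : (0:ℝ) ≤ 7/16),
      ENNReal.ofReal_rpow_of_nonneg (Real.rpow_nonneg hr _) (by norm_num : (0:ℝ) ≤ 7/16),
      ← Real.rpow_mul hr]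
    norm_num
  calc ∫⁻ x, f x * Phi f r x
      ≤ B ^ ((3:ℝ)/4) * (∫⁻ x, Phi f r x ^ (4:ℝ)) ^ ((1:ℝ)/4) := H
    _ ≤ B ^ ((3:ℝ)/4) * (((B ^ ((3:ℝ)/4) * w ^ ((1:ℝ)/4)) ^ (3:ℝ) * (w * A)) ^ ((1:ℝ)/4)) := by
        gcongr
    _ = B ^ ((21:ℝ)/16) * w ^ ((7:ℝ)/16) * A ^ ((1:ℝ)/4) := rpow_alg B w A
    _ = B ^ ((21:ℝ)/16) * A ^ ((1:ℝ)/4) * v ^ ((7:ℝ)/16) * ENNReal.ofReal (r ^ ((21:ℝ)/16)) := by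
        rw [hwv]; ring

lemma meas_Phi_r (hf : Measurable f) (x : E3) : Measurable fun r : ℝ => Phi f r x := by
  have hs : MeasurableSet {q : ℝ × E3 | dist q.2 x < q.1} :=
    measurableSet_lt (measurable_snd.dist measurable_const) measurable_fst
  have heq : (fun r : ℝ => Phi f r x)
      = fun r => ∫⁻ y, {q : ℝ × E3 | dist q.2 x < q.1}.indicator (fun q => f q.2) (r, y) := by
    funext r
    simp only [Phi]
    congr 1; funext y
    by_cases h : dist y x < r <;> simp [Set.indicator_apply, h, Metric.mem_ball]
  rw [heq]
  exact Measurable.lintegral_prod_right' ((hf.comp measurable_snd).indicator hs)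

lemma meas_Phi_swap (hf : Measurable f) : Measurable fun q : E3 × ℝ => Phi f q.2 q.1 := by
  have hs : MeasurableSet {q : (E3 × ℝ) × E3 | dist q.2 q.1.1 < q.1.2} :=
    measurableSet_lt (measurable_snd.dist measurable_fst.fst) measurable_fst.snd
  have heq : (fun q : E3 × ℝ => Phi f q.2 q.1)
      = fun q => ∫⁻ y, {q : (E3 × ℝ) × E3 | dist q.2 q.1.1 < q.1.2}.indicator
          (fun q => f q.2) (q, y) := by
    funext q
    simp only [Phi]
    congr 1; funext y
    by_cases h : dist y q.1 < q.2 <;> simp [Set.indicator_apply, h, Metric.mem_ball]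
  rw [heq]
  exact Measurable.lintegral_prod_right' ((hf.comp measurable_snd).indicator hs)

/-- kernel measurability helper -/
lemma meas_K : Measurable fun r : ℝ => ENNReal.ofReal (r ^ (-2:ℝ)) := by fun_prop

lemma inner_le (hf : Measurable f) (x : E3) :
    ∫⁻ y, f y * ENNReal.ofReal ‖x - y‖⁻¹ ≤
      ∫⁻ r in Ioi (0:ℝ), ENNReal.ofReal (r ^ (-2:ℝ)) * Phi f r x := by
  have step1 : ∫⁻ y, f y * ENNReal.ofReal ‖x - y‖⁻¹ ≤
      ∫⁻ y, ∫⁻ r in Ioi (0:ℝ), f y *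
        (Ioi ‖x - y‖).indicator (fun r => ENNReal.ofReal (r ^ (-2:ℝ))) r := by
    refine lintegral_mono fun y => ?_
    rw [lintegral_const_mul _ (meas_K.indicator measurableSet_Ioi)]
    exact mul_le_mul_right (kernel_le (x - y)) _
  -- uncurry measurability on the product
  have hFm : Measurable fun q : E3 × ℝ =>
      f q.1 * (Ioi ‖x - q.1‖).indicator (fun r => ENNReal.ofReal (r ^ (-2:ℝ))) q.2 := by
    have hs : MeasurableSet {q : E3 × ℝ | ‖x - q.1‖ < q.2} :=
      measurableSet_lt ((measurable_const.sub measurable_fst).norm) measurable_snd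
    have heq : (fun q : E3 × ℝ =>
        f q.1 * (Ioi ‖x - q.1‖).indicator (fun r => ENNReal.ofReal (r ^ (-2:ℝ))) q.2)
        = {q : E3 × ℝ | ‖x - q.1‖ < q.2}.indicator
            (fun q => f q.1 * ENNReal.ofReal (q.2 ^ (-2:ℝ))) := by
      funext q
      by_cases h : ‖x - q.1‖ < q.2 <;> simp [Set.indicator_apply, h]
    rw [heq]
    exact ((hf.comp measurable_fst).mul (meas_K.comp measurable_snd)).indicator hs
  have step2 : (∫⁻ y, ∫⁻ r in Ioi (0:ℝ), f y *
        (Ioi ‖x - y‖).indicator (fun r => ENNReal.ofReal (r ^ (-2:ℝ))) r)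
      = ∫⁻ r in Ioi (0:ℝ), ∫⁻ y, f y *
        (Ioi ‖x - y‖).indicator (fun r => ENNReal.ofReal (r ^ (-2:ℝ))) r :=
    lintegral_lintegral_swap hFm.aemeasurable
  have step3 : ∀ r : ℝ, (∫⁻ y, f y *
        (Ioi ‖x - y‖).indicator (fun r => ENNReal.ofReal (r ^ (-2:ℝ))) r)
      = ENNReal.ofReal (r ^ (-2:ℝ)) * Phi f r x := by
    intro r
    have hpt : ∀ y, f y * (Ioi ‖x - y‖).indicator (fun r => ENNReal.ofReal (r ^ (-2:ℝ))) r
        = ENNReal.ofReal (r ^ (-2:ℝ)) * (f y * (ball x r).indicator 1 y) := by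
      intro y
      have hmem : (r ∈ Ioi ‖x - y‖) ↔ y ∈ ball x r := by
        rw [Metric.mem_ball, Set.mem_Ioi, dist_eq_norm, norm_sub_rev]
      by_cases h : y ∈ ball x r
      · simp [Set.indicator_apply, hmem.2 h, h, mul_comm]
      · have h'' : ¬ ‖x - y‖ < r := fun hc => h (hmem.1 hc)
        simp [Set.indicator_apply, h, h'']
    simp_rw [hpt]
    have hm : Measurable fun y => f y * (ball x r).indicator (1:E3→ℝ≥0∞) y :=
      hf.mul (measurable_const.indicator measurableSet_ball)
    rw [lintegral_const_mul _ hm]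
    rfl
  refine step1.trans (le_of_eq (step2.trans ?_))
  exact lintegral_congr step3

lemma T_le (hf : Measurable f) :
    ∫⁻ x, f x * ∫⁻ y, f y * ENNReal.ofReal ‖x - y‖⁻¹ ≤
      ∫⁻ r in Ioi (0:ℝ), ENNReal.ofReal (r ^ (-2:ℝ)) * ∫⁻ x, f x * Phi f r x := by
  have hPhiProd : Measurable fun q : E3 × ℝ => Phi f q.2 q.1 := meas_Phi_swap hf
  have step1 : ∫⁻ x, f x * ∫⁻ y, f y * ENNReal.ofReal ‖x - y‖⁻¹ ≤
      ∫⁻ x, ∫⁻ r in Ioi (0:ℝ), f x * (ENNReal.ofReal (r ^ (-2:ℝ)) * Phi f r x) := by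
    refine lintegral_mono fun x => ?_
    have hm : Measurable fun r : ℝ => ENNReal.ofReal (r ^ (-2:ℝ)) * Phi f r x :=
      meas_K.mul (meas_Phi_r hf x)
    rw [lintegral_const_mul _ hm]
    exact mul_le_mul_right (inner_le hf x) _
  have hFm : Measurable fun q : E3 × ℝ =>
      f q.1 * (ENNReal.ofReal (q.2 ^ (-2:ℝ)) * Phi f q.2 q.1) :=
    (hf.comp measurable_fst).mul ((meas_K.comp measurable_snd).mul hPhiProd)
  have step2 : (∫⁻ x, ∫⁻ r in Ioi (0:ℝ), f x * (ENNReal.ofReal (r ^ (-2:ℝ)) * Phi f r x))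
      = ∫⁻ r in Ioi (0:ℝ), ∫⁻ x, f x * (ENNReal.ofReal (r ^ (-2:ℝ)) * Phi f r x) :=
    lintegral_lintegral_swap hFm.aemeasurable
  refine step1.trans (le_of_eq (step2.trans (lintegral_congr fun r => ?_)))
  have hpt : ∀ x, f x * (ENNReal.ofReal (r ^ (-2:ℝ)) * Phi f r x)
      = ENNReal.ofReal (r ^ (-2:ℝ)) * (f x * Phi f r x) := fun x => by ring
  simp_rw [hpt]
  have hm : Measurable fun x => f x * Phi f r x := hf.mul (meas_Phi hf r)
  rw [lintegral_const_mul _ hm]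

lemma lint_Ioi {S : ℝ} (hS : 0 < S) :
    ∫⁻ r in Ioi S, ENNReal.ofReal (r ^ (-2:ℝ)) = ENNReal.ofReal S⁻¹ := by
  rw [← ofReal_integral_eq_lintegral_ofReal
      (integrableOn_Ioi_rpow_of_lt (by norm_num) hS)
      ((ae_restrict_iff' measurableSet_Ioi).2 (Filter.Eventually.of_forall
        fun r hr => Real.rpow_nonneg (le_trans hS.le (le_of_lt hr)) _)),
    integral_Ioi_rpow_of_lt (by norm_num) hS]
  congr 1
  rw [show (-2:ℝ) + 1 = -1 by norm_num, Real.rpow_neg_one]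
  field_simp

lemma lint_Ioc {S : ℝ} (hS : 0 < S) :
    ∫⁻ r in Ioc (0:ℝ) S, ENNReal.ofReal (r ^ (-(11:ℝ)/16)) =
      ENNReal.ofReal ((16/5) * S ^ ((5:ℝ)/16)) := by
  have hint : IntegrableOn (fun r : ℝ => r ^ (-(11:ℝ)/16)) (Ioc 0 S) :=
    (intervalIntegral.intervalIntegrable_rpow' (by norm_num)).1
  rw [← ofReal_integral_eq_lintegral_ofReal hint
      ((ae_restrict_iff' measurableSet_Ioc).2 (Filter.Eventually.of_forall
        fun r hr => Real.rpow_nonneg hr.1.le _)),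
    ← intervalIntegral.integral_of_le hS.le,
    integral_rpow (Or.inl (by norm_num))]
  congr 1
  rw [show -(11:ℝ)/16 + 1 = 5/16 by norm_num, Real.zero_rpow (by norm_num)]
  ring

lemma split_bound (hf : Measurable f) {S : ℝ} (hS : 0 < S) :
    (∫⁻ r in Ioi (0:ℝ), ENNReal.ofReal (r ^ (-2:ℝ)) * ∫⁻ x, f x * Phi f r x)
      ≤ (∫⁻ y, f y ^ ((4:ℝ)/3)) ^ ((21:ℝ)/16) * (∫⁻ y, f y) ^ ((1:ℝ)/4) * v ^ ((7:ℝ)/16)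
          * ENNReal.ofReal ((16/5) * S ^ ((5:ℝ)/16))
        + (∫⁻ y, f y) * (∫⁻ y, f y) * ENNReal.ofReal S⁻¹ := by
  set B := ∫⁻ y, f y ^ ((4:ℝ)/3) with hB
  set A := ∫⁻ y, f y with hA
  set C1 := B ^ ((21:ℝ)/16) * A ^ ((1:ℝ)/4) * v ^ ((7:ℝ)/16) with hC1
  rw [← Set.Ioc_union_Ioi_eq_Ioi hS.le,
    lintegral_union measurableSet_Ioi (Set.Ioc_disjoint_Ioi le_rfl)]
  refine add_le_add ?_ ?_
  · calc ∫⁻ r in Ioc (0:ℝ) S, ENNReal.ofReal (r ^ (-2:ℝ)) * ∫⁻ x, f x * Phi f r x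
        ≤ ∫⁻ r in Ioc (0:ℝ) S, C1 * ENNReal.ofReal (r ^ (-(11:ℝ)/16)) := by
          refine setLIntegral_mono (by fun_prop) fun r hr => ?_
          calc ENNReal.ofReal (r ^ (-2:ℝ)) * ∫⁻ x, f x * Phi f r x
              ≤ ENNReal.ofReal (r ^ (-2:ℝ)) * (C1 * ENNReal.ofReal (r ^ ((21:ℝ)/16))) :=
                mul_le_mul_right (I_le_pow hf hr.1.le) _
            _ = C1 * (ENNReal.ofReal (r ^ (-2:ℝ)) * ENNReal.ofReal (r ^ ((21:ℝ)/16))) := by ring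
            _ = C1 * ENNReal.ofReal (r ^ (-(11:ℝ)/16)) := by
                rw [← ENNReal.ofReal_mul (Real.rpow_nonneg hr.1.le _), ← Real.rpow_add hr.1]
                norm_num
      _ = C1 * ENNReal.ofReal ((16/5) * S ^ ((5:ℝ)/16)) := by
          rw [lintegral_const_mul _ (by fun_prop), lint_Ioc hS]
  · calc ∫⁻ r in Ioi S, ENNReal.ofReal (r ^ (-2:ℝ)) * ∫⁻ x, f x * Phi f r x
        ≤ ∫⁻ r in Ioi S, (A * A) * ENNReal.ofReal (r ^ (-2:ℝ)) := by
          refine setLIntegral_mono (by fun_prop) fun r hr => ?_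
          rw [mul_comm (A * A)]
          exact mul_le_mul_right (I_le_sq hf r) _
      _ = A * A * ENNReal.ofReal S⁻¹ := by
          rw [lintegral_const_mul _ (by fun_prop), lint_Ioi hS]

end

end Coulomb

theorem stmt_0 :
    ∃ C : ℝ, 0 < C ∧
      ∀ ρ : EuclideanSpace ℝ (Fin 3) → ℝ,
        Measurable ρ → (∀ x, 0 ≤ ρ x) →
        Integrable ρ →
        MemLp ρ (ENNReal.ofReal (4 / 3)) →
        ∫ x, ∫ y, ρ x * ρ y / ‖x - y‖ ≤
          C * (∫ x, ρ x) ^ ((2 : ℝ) / 3) * (∫ x, ρ x ^ ((4 : ℝ) / 3)) := by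
  classical
  refine ⟨16 / 5 * (Coulomb.v ^ ((7:ℝ)/16)).toReal + 1, ?_, fun ρ hm hnn hint h43 => ?_⟩
  · have := ENNReal.toReal_nonneg (a := Coulomb.v ^ ((7:ℝ)/16))
    linarith
  set c0 := (Coulomb.v ^ ((7:ℝ)/16)).toReal with hc0
  have hc0nn : 0 ≤ c0 := ENNReal.toReal_nonneg
  set f := fun x : Coulomb.E3 => ENNReal.ofReal (ρ x) with hfdef
  have hf : Measurable f := hm.ennreal_ofReal
  set a := ∫ x, ρ x with hadef
  set b := ∫ x, ρ x ^ ((4:ℝ)/3) with hbdef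
  have ha0 : 0 ≤ a := integral_nonneg hnn
  have hb0 : 0 ≤ b := integral_nonneg fun x => Real.rpow_nonneg (hnn x) _
  have hA : ∫⁻ x, f x = ENNReal.ofReal a :=
    (ofReal_integral_eq_lintegral_ofReal hint (Filter.Eventually.of_forall hnn)).symm
  have hb_int : Integrable fun x => ρ x ^ ((4:ℝ)/3) := by
    have h1 := h43.integrable_norm_rpow (by simp) ENNReal.ofReal_ne_top
    rw [ENNReal.toReal_ofReal (by norm_num)] at h1
    refine h1.congr (Filter.Eventually.of_forall fun x => ?_)
    simp only [Real.norm_eq_abs, abs_of_nonneg (hnn x)]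
  have hB : ∫⁻ x, f x ^ ((4:ℝ)/3) = ENNReal.ofReal b := by
    have h1 : ∀ x, f x ^ ((4:ℝ)/3) = ENNReal.ofReal (ρ x ^ ((4:ℝ)/3)) := fun x =>
      ENNReal.ofReal_rpow_of_nonneg (hnn x) (by norm_num)
    simp_rw [h1]
    exact (ofReal_integral_eq_lintegral_ofReal hb_int
      (Filter.Eventually.of_forall fun x => Real.rpow_nonneg (hnn x) _)).symm
  -- inner measurability
  have hinner_meas : Measurable fun x : Coulomb.E3 =>
      ∫⁻ y, f y * ENNReal.ofReal ‖x - y‖⁻¹ :=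
    Measurable.lintegral_prod_right'
      ((hf.comp measurable_snd).mul
        ((((measurable_fst.sub measurable_snd).norm).inv).ennreal_ofReal))
  set g' := fun x : Coulomb.E3 =>
    (f x * ∫⁻ y, f y * ENNReal.ofReal ‖x - y‖⁻¹).toReal with hg'def
  have hg'_meas : Measurable g' := (hf.mul hinner_meas).ennreal_toReal
  have hgg' : ∀ x, (∫ y, ρ x * ρ y / ‖x - y‖) = g' x := by
    intro x
    have hmeas_y : AEStronglyMeasurable (fun y : Coulomb.E3 => ρ x * ρ y / ‖x - y‖) volume :=
      ((measurable_const.mul hm).div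
        ((measurable_const.sub measurable_id).norm)).aestronglyMeasurable
    rw [integral_eq_lintegral_of_nonneg_ae (Filter.Eventually.of_forall fun y =>
      div_nonneg (mul_nonneg (hnn x) (hnn y)) (norm_nonneg _)) hmeas_y]
    have hpt : ∀ y, ENNReal.ofReal (ρ x * ρ y / ‖x - y‖)
        = f x * (f y * ENNReal.ofReal ‖x - y‖⁻¹) := fun y => by
      rw [div_eq_mul_inv, mul_assoc, ENNReal.ofReal_mul (hnn x), ENNReal.ofReal_mul (hnn y)]
    simp_rw [hpt]
    have hmy : Measurable fun y : Coulomb.E3 => f y * ENNReal.ofReal ‖x - y‖⁻¹ :=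
      hf.mul ((((measurable_const.sub measurable_id).norm).inv).ennreal_ofReal)
    rw [lintegral_const_mul _ hmy]
  have hLHS : (∫ x, ∫ y, ρ x * ρ y / ‖x - y‖) = ∫ x, g' x :=
    integral_congr_ae (Filter.Eventually.of_forall hgg')
  rw [hLHS, integral_eq_lintegral_of_nonneg_ae
    (Filter.Eventually.of_forall fun x => ENNReal.toReal_nonneg)
    hg'_meas.aestronglyMeasurable]
  refine ENNReal.toReal_le_of_le_ofReal ?_ ?_
  · have : (0:ℝ) ≤ a ^ ((2:ℝ)/3) := Real.rpow_nonneg ha0 _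
    have h5 : (0:ℝ) ≤ 16 / 5 * c0 + 1 := by linarith
    exact mul_nonneg (mul_nonneg h5 this) hb0
  have hT1 : ∫⁻ x, ENNReal.ofReal (g' x) ≤
      ∫⁻ x, f x * ∫⁻ y, f y * ENNReal.ofReal ‖x - y‖⁻¹ :=
    lintegral_mono fun x => ENNReal.ofReal_toReal_le
  by_cases hb : b = 0
  · have h0 : (fun x => ρ x ^ ((4:ℝ)/3)) =ᵐ[volume] 0 :=
      (integral_eq_zero_iff_of_nonneg_ae
        (Filter.Eventually.of_forall fun x => Real.rpow_nonneg (hnn x) _) hb_int).1 hb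
    have hf0 : f =ᵐ[volume] 0 := by
      filter_upwards [h0] with x hx
      have hx' : ρ x ^ ((4:ℝ)/3) = 0 := hx
      have hρx : ρ x = 0 := ((Real.rpow_eq_zero_iff_of_nonneg (hnn x)).1 hx').1
      simp [hfdef, hρx]
    have hT0 : (∫⁻ x, f x * ∫⁻ y, f y * ENNReal.ofReal ‖x - y‖⁻¹) = 0 := by
      rw [← lintegral_zero]
      refine lintegral_congr_ae ?_
      filter_upwards [hf0] with x hx
      rw [hx]
      simp
    refine le_trans (hT1.trans (le_of_eq hT0)) ?_
    simp
  · have hbpos : 0 < b := lt_of_le_of_ne hb0 (Ne.symm hb)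
    have hane : a ≠ 0 := by
      intro ha'
      apply hb
      have hρ0 : ρ =ᵐ[volume] 0 :=
        (integral_eq_zero_iff_of_nonneg_ae (Filter.Eventually.of_forall hnn) hint).1 ha'
      rw [hbdef]
      refine integral_eq_zero_of_ae ?_
      filter_upwards [hρ0] with x hx
      have hx' : ρ x = 0 := hx
      simp [hx', Real.zero_rpow (by norm_num : ((4:ℝ)/3) ≠ 0)]
    have hapos : 0 < a := lt_of_le_of_ne ha0 (Ne.symm hane)
    set S := a ^ ((4:ℝ)/3) / b with hSdef
    have hS : 0 < S := by positivity
    have key := (Coulomb.T_le hf).trans (Coulomb.split_bound hf hS)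
    rw [hA, hB] at key
    refine hT1.trans (key.trans ?_)
    have hv : Coulomb.v ^ ((7:ℝ)/16) = ENNReal.ofReal c0 :=
      (ENNReal.ofReal_toReal (ENNReal.rpow_ne_top_of_nonneg (by norm_num) Coulomb.v_ne_top)).symm
    have hS16nn : (0:ℝ) ≤ 16 / 5 * S ^ ((5:ℝ)/16) := by positivity
    have e1 : ENNReal.ofReal b ^ ((21:ℝ)/16) * ENNReal.ofReal a ^ ((1:ℝ)/4) *
        Coulomb.v ^ ((7:ℝ)/16) * ENNReal.ofReal (16 / 5 * S ^ ((5:ℝ)/16))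
        = ENNReal.ofReal (b ^ ((21:ℝ)/16) * a ^ ((1:ℝ)/4) * c0 * (16 / 5 * S ^ ((5:ℝ)/16))) := by
      rw [ENNReal.ofReal_rpow_of_nonneg hb0 (by norm_num),
        ENNReal.ofReal_rpow_of_nonneg ha0 (by norm_num), hv,
        ← ENNReal.ofReal_mul (Real.rpow_nonneg hb0 _),
        ← ENNReal.ofReal_mul (mul_nonneg (Real.rpow_nonneg hb0 _) (Real.rpow_nonneg ha0 _)),
        ← ENNReal.ofReal_mul (mul_nonneg (mul_nonneg (Real.rpow_nonneg hb0 _)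
          (Real.rpow_nonneg ha0 _)) hc0nn)]
    have e2 : ENNReal.ofReal a * ENNReal.ofReal a * ENNReal.ofReal S⁻¹
        = ENNReal.ofReal (a * a * S⁻¹) := by
      rw [← ENNReal.ofReal_mul ha0, ← ENNReal.ofReal_mul (mul_nonneg ha0 ha0)]
    rw [e1, e2, ← ENNReal.ofReal_add (by positivity) (by positivity)]
    apply ENNReal.ofReal_le_ofReal
    have hS5 : S ^ ((5:ℝ)/16) = a ^ ((5:ℝ)/12) / b ^ ((5:ℝ)/16) := by
      rw [hSdef, Real.div_rpow (Real.rpow_nonneg ha0 _) hb0, ← Real.rpow_mul ha0]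
      norm_num
    have hSi : S⁻¹ = b / a ^ ((4:ℝ)/3) := by rw [hSdef, inv_div]
    rw [hS5, hSi]
    have h1 : a * a = a ^ (2:ℝ) := by
      rw [show (2:ℝ) = ((2:ℕ):ℝ) by norm_num, Real.rpow_natCast]
      ring
    have hb21 : b ^ ((21:ℝ)/16) / b ^ ((5:ℝ)/16) = b := by
      rw [← Real.rpow_sub hbpos]
      norm_num
    have ha14 : a ^ ((1:ℝ)/4) * a ^ ((5:ℝ)/12) = a ^ ((2:ℝ)/3) := by
      rw [← Real.rpow_add hapos]
      norm_num
    have ha2 : a ^ (2:ℝ) / a ^ ((4:ℝ)/3) = a ^ ((2:ℝ)/3) := by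
      rw [← Real.rpow_sub hapos]
      norm_num
    calc b ^ ((21:ℝ)/16) * a ^ ((1:ℝ)/4) * c0 * (16 / 5 * (a ^ ((5:ℝ)/12) / b ^ ((5:ℝ)/16)))
          + a * a * (b / a ^ ((4:ℝ)/3))
        = 16 / 5 * c0 * (a ^ ((1:ℝ)/4) * a ^ ((5:ℝ)/12)) * (b ^ ((21:ℝ)/16) / b ^ ((5:ℝ)/16))
          + (a ^ (2:ℝ) / a ^ ((4:ℝ)/3)) * b := by
          rw [← h1]; ring
      _ = 16 / 5 * c0 * a ^ ((2:ℝ)/3) * b + a ^ ((2:ℝ)/3) * b := by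
          rw [ha14, hb21, ha2]
      _ ≤ (16 / 5 * c0 + 1) * a ^ ((2:ℝ)/3) * b := le_of_eq (by ring)
end

section
/- Let γ ∈ (6/5, 4/3). If ρ is nonnegative with Q(ρ) > 0 (where Q(ρ) = 3K∫ρ^γ − (1/2)∬ρ(x)ρ(y)/|x−y|), and l_μ ∈ ℝ denotes the infimum of S_μ over {Q = 0}, then Q(ρ) ≥ (l_μ − S_μ(ρ))/(λ*(ρ) − 1), where λ*(ρ) = (6K∫ρ^γ / ∬ρ(x)ρ(y)/|x−y|)^{1/(4−3γ)} > 1. -/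
open MeasureTheory

set_option maxHeartbeats 1000000 in
theorem stmt_8 (γ K c lμ : ℝ) (hγ1 : 6 / 5 < γ) (hγ2 : γ < 4 / 3) (hK : 0 < K)
    (Q S : (EuclideanSpace ℝ (Fin 3) → ℝ) → ℝ)
    (hQ : ∀ ϱ : EuclideanSpace ℝ (Fin 3) → ℝ,
      Q ϱ = 3 * K * (∫ x, ϱ x ^ γ) - (1 / 2) * ∫ x, ∫ y, ϱ x * ϱ y / ‖x - y‖)
    (hS : ∀ ϱ : EuclideanSpace ℝ (Fin 3) → ℝ,
      S ϱ = (K / (γ - 1)) * (∫ x, ϱ x ^ γ) -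
        (1 / 2) * (∫ x, ∫ y, ϱ x * ϱ y / ‖x - y‖) - c * (∫ x, ϱ x))
    (hlμ : ∀ ϱ : EuclideanSpace ℝ (Fin 3) → ℝ,
      (∀ x, 0 ≤ ϱ x) → Q ϱ = 0 → lμ ≤ S ϱ)
    (ρ : EuclideanSpace ℝ (Fin 3) → ℝ)
    (hmeas : Measurable ρ) (hpos : ∀ x, 0 ≤ ρ x)
    (hInt : Integrable ρ)
    (hIγ : Integrable (fun x => ρ x ^ γ)) (hIγpos : 0 < ∫ x, ρ x ^ γ)
    (hprod : Integrable
      (fun p : EuclideanSpace ℝ (Fin 3) × EuclideanSpace ℝ (Fin 3) =>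
        ρ p.1 * ρ p.2 / ‖p.1 - p.2‖) (volume.prod volume))
    (hQρ : 0 < Q ρ)
    (lstar : ℝ)
    (hls : lstar = (6 * K * (∫ x, ρ x ^ γ) /
      (∫ x, ∫ y, ρ x * ρ y / ‖x - y‖)) ^ (1 / (4 - 3 * γ))) :
    1 < lstar ∧ (lμ - S ρ) / (lstar - 1) ≤ Q ρ := by
  haveI : ((volume : Measure (EuclideanSpace ℝ (Fin 3))).prod volume).IsAddHaarMeasure :=
    Measure.prod.instIsAddHaarMeasure (volume : Measure (EuclideanSpace ℝ (Fin 3))) (volume : Measure (EuclideanSpace ℝ (Fin 3)))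
  set A := ∫ x, ρ x ^ γ with hA
  set B := ∫ x, ∫ y, ρ x * ρ y / ‖x - y‖ with hB
  set f : EuclideanSpace ℝ (Fin 3) × EuclideanSpace ℝ (Fin 3) → ℝ :=
    fun p => ρ p.1 * ρ p.2 / ‖p.1 - p.2‖ with hf
  have hfnn : ∀ p, 0 ≤ f p := fun p =>
    div_nonneg (mul_nonneg (hpos _) (hpos _)) (norm_nonneg _)
  have hBf : B = ∫ p, f p ∂(volume.prod volume) := integral_integral hprod
  -- positivity of the set where ρ > 0
  have hγ0 : γ ≠ 0 := by intro h; rw [h] at hγ1; norm_num at hγ1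
  have hm : 0 < volume {x : EuclideanSpace ℝ (Fin 3) | 0 < ρ x} := by
    by_contra h
    push_neg at h
    have h0 : volume {x : EuclideanSpace ℝ (Fin 3) | 0 < ρ x} = 0 := le_antisymm h bot_le
    have hae : ρ =ᵐ[volume] 0 := by
      refine (ae_iff).2 ?_
      convert h0 using 2
      ext x
      simp only [Pi.zero_apply]
      constructor
      · intro hx; exact lt_of_le_of_ne (hpos x) (Ne.symm hx)
      · intro hx; exact ne_of_gt hx
    have : (fun x => ρ x ^ γ) =ᵐ[volume] 0 := by
      filter_upwards [hae] with x hx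
      simp [hx, Real.zero_rpow hγ0]
    have : A = 0 := by rw [hA, integral_congr_ae this]; simp
    rw [this] at hIγpos; exact lt_irrefl 0 hIγpos
  -- B > 0
  have hdiag : (volume.prod volume)
      {p : EuclideanSpace ℝ (Fin 3) × EuclideanSpace ℝ (Fin 3) | p.1 = p.2} = 0 := by
    have hms : MeasurableSet
        {p : EuclideanSpace ℝ (Fin 3) × EuclideanSpace ℝ (Fin 3) | p.1 = p.2} :=
      measurableSet_eq_fun measurable_fst measurable_snd
    rw [Measure.prod_apply hms]
    have : ∀ x : EuclideanSpace ℝ (Fin 3),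
        (volume (Prod.mk x ⁻¹' {p : EuclideanSpace ℝ (Fin 3) ×
          EuclideanSpace ℝ (Fin 3) | p.1 = p.2})) = 0 := by
      intro x
      have : (Prod.mk x ⁻¹' {p : EuclideanSpace ℝ (Fin 3) ×
          EuclideanSpace ℝ (Fin 3) | p.1 = p.2}) = {x} := by
        ext y; simp [eq_comm]
      rw [this]; exact measure_singleton x
    simp [this]
  have hBpos : 0 < B := by
    rw [hBf]
    refine (integral_pos_iff_support_of_nonneg hfnn hprod).2 ?_
    have hsub : ({x : EuclideanSpace ℝ (Fin 3) | 0 < ρ x} ×ˢ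
        {x : EuclideanSpace ℝ (Fin 3) | 0 < ρ x}) \
        {p : EuclideanSpace ℝ (Fin 3) × EuclideanSpace ℝ (Fin 3) | p.1 = p.2}
        ⊆ Function.support f := by
      rintro ⟨x, y⟩ ⟨⟨hx, hy⟩, hne⟩
      have hxy : x ≠ y := hne
      have : 0 < f (x, y) := by
        apply div_pos (mul_pos hx hy)
        rw [norm_pos_iff, sub_ne_zero]
        exact hxy
      exact ne_of_gt this
    have h1 : (volume.prod volume) (({x : EuclideanSpace ℝ (Fin 3) | 0 < ρ x} ×ˢ
        {x : EuclideanSpace ℝ (Fin 3) | 0 < ρ x}) \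
        {p : EuclideanSpace ℝ (Fin 3) × EuclideanSpace ℝ (Fin 3) | p.1 = p.2}) =
        (volume.prod volume) ({x : EuclideanSpace ℝ (Fin 3) | 0 < ρ x} ×ˢ
        {x : EuclideanSpace ℝ (Fin 3) | 0 < ρ x}) := measure_diff_null hdiag
    have h2 : (0:ENNReal) < (volume.prod volume) ({x : EuclideanSpace ℝ (Fin 3) | 0 < ρ x} ×ˢ
        {x : EuclideanSpace ℝ (Fin 3) | 0 < ρ x}) := by
      rw [Measure.prod_prod]
      exact ENNReal.mul_pos (ne_of_gt hm) (ne_of_gt hm)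
    calc (0:ENNReal) < _ := h2
      _ = _ := h1.symm
      _ ≤ _ := measure_mono hsub
  
  -- lstar > 1
  have hγ1' : (1:ℝ) < γ := by linarith
  have hε : (0:ℝ) < 4 - 3 * γ := by linarith
  have hQB : B < 6 * K * A := by
    have := hQ ρ
    rw [← hA, ← hB] at this
    nlinarith [hQρ]
  have hXpos : (0:ℝ) < 6 * K * A / B := div_pos (by positivity) hBpos
  have hbase : (1:ℝ) < 6 * K * A / B := (one_lt_div hBpos).2 hQB
  have hl1 : 1 < lstar := by
    rw [hls]
    exact (Real.one_lt_rpow_iff_of_pos hXpos).2 (Or.inl ⟨hbase, by positivity⟩)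
  have hl0 : (0:ℝ) < lstar := lt_trans one_pos hl1
  -- lstar ^ (3γ - 4) = B / (6 K A)
  have hlp : lstar ^ (3 * γ - 4 : ℝ) = B / (6 * K * A) := by
    rw [hls, ← Real.rpow_mul hXpos.le]
    have he : (1 / (4 - 3 * γ)) * (3 * γ - 4) = (-1 : ℝ) := by
      field_simp
      ring
    rw [he, Real.rpow_neg_one, inv_div]
  -- the rescaled function
  set σ : EuclideanSpace ℝ (Fin 3) → ℝ := fun x => lstar ^ (3:ℕ) * ρ (lstar • x) with hσ
  have hσnn : ∀ x, 0 ≤ σ x := fun x => mul_nonneg (by positivity) (hpos _)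
  have hpow3 : (lstar ^ (3:ℕ)) = lstar ^ ((3:ℝ)) := by
    rw [← Real.rpow_natCast lstar 3]; norm_num
  -- ∫ σ ^ γ
  have hcs1 := Measure.integral_comp_smul (volume : Measure (EuclideanSpace ℝ (Fin 3)))
    (fun x => ρ x ^ γ) lstar
  rw [finrank_euclideanSpace_fin] at hcs1
  have hAσ : ∫ x, σ x ^ γ = lstar ^ (3 * γ - 3 : ℝ) * A := by
    have h1 : ∀ x, σ x ^ γ = (lstar ^ (3:ℕ)) ^ γ * ρ (lstar • x) ^ γ := fun x =>
      Real.mul_rpow (by positivity) (hpos _)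
    calc ∫ x, σ x ^ γ = ∫ x, (lstar ^ (3:ℕ)) ^ γ * ρ (lstar • x) ^ γ := by
          exact integral_congr_ae (Filter.Eventually.of_forall fun x => h1 x)
      _ = (lstar ^ (3:ℕ)) ^ γ * ∫ x, ρ (lstar • x) ^ γ := integral_const_mul _ _
      _ = (lstar ^ (3:ℕ)) ^ γ * (|(lstar ^ 3)⁻¹| • A) := by rw [hcs1]
      _ = lstar ^ (3 * γ - 3 : ℝ) * A := by
          rw [smul_eq_mul, abs_of_pos (by positivity), ← mul_assoc]
          congr 1
          rw [hpow3, ← Real.rpow_neg hl0.le, ← Real.rpow_mul hl0.le,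
            ← Real.rpow_add hl0]
          norm_num
          ring_nf
  -- ∫ σ
  have hcs2 := Measure.integral_comp_smul (volume : Measure (EuclideanSpace ℝ (Fin 3))) ρ lstar
  rw [finrank_euclideanSpace_fin] at hcs2
  have hIσ : ∫ x, σ x = ∫ x, ρ x := by
    calc ∫ x, σ x = lstar ^ (3:ℕ) * ∫ x, ρ (lstar • x) := integral_const_mul _ _
      _ = lstar ^ (3:ℕ) * (|(lstar ^ 3)⁻¹| • ∫ x, ρ x) := by rw [hcs2]
      _ = ∫ x, ρ x := by
          rw [smul_eq_mul, abs_of_pos (by positivity), ← mul_assoc,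
            mul_inv_cancel₀ (by positivity)]
          ring
  -- double integral of σ
  set g : EuclideanSpace ℝ (Fin 3) × EuclideanSpace ℝ (Fin 3) → ℝ :=
    fun p => σ p.1 * σ p.2 / ‖p.1 - p.2‖ with hg
  have hgf : ∀ p, g p = lstar ^ (7:ℕ) * f (lstar • p) := by
    rintro ⟨x, y⟩
    have hx1 : (lstar • (x, y)).1 = lstar • x := rfl
    have hx2 : (lstar • (x, y)).2 = lstar • y := rfl
    have hn : ‖lstar • x - lstar • y‖ = lstar * ‖x - y‖ := by
      rw [← smul_sub, norm_smul, Real.norm_eq_abs, abs_of_pos hl0]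
    simp only [hg, hf, hσ, hx1, hx2, hn]
    rcases eq_or_ne ‖x - y‖ 0 with hz | hz
    · simp [hz]
    · field_simp
  have hgint : Integrable g (volume.prod volume) := by
    have h1 : Integrable (fun p : EuclideanSpace ℝ (Fin 3) × EuclideanSpace ℝ (Fin 3) =>
        lstar ^ (7:ℕ) * f (lstar • p)) (volume.prod volume) :=
      (hprod.comp_smul hl0.ne').const_mul _
    exact h1.congr (Filter.Eventually.of_forall fun p => (hgf p).symm)
  have hcs3 := Measure.integral_comp_smul (volume.prod volume) f lstar
  rw [Module.finrank_prod, finrank_euclideanSpace_fin] at hcs3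
  have hBσ : ∫ x, ∫ y, σ x * σ y / ‖x - y‖ = lstar * B := by
    have hit : ∫ x, ∫ y, σ x * σ y / ‖x - y‖ = ∫ p, g p ∂(volume.prod volume) :=
      integral_integral hgint
    rw [hit]
    calc ∫ p, g p ∂(volume.prod volume)
        = ∫ p, lstar ^ (7:ℕ) * f (lstar • p) ∂(volume.prod volume) :=
          integral_congr_ae (Filter.Eventually.of_forall fun p => hgf p)
      _ = lstar ^ (7:ℕ) * ∫ p, f (lstar • p) ∂(volume.prod volume) := integral_const_mul _ _
      _ = lstar ^ (7:ℕ) * (|(lstar ^ (3 + 3))⁻¹| • ∫ p, f p ∂(volume.prod volume)) := by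
          rw [hcs3]
      _ = lstar * B := by
          rw [smul_eq_mul, abs_of_pos (by positivity), ← hBf, ← mul_assoc]
          congr 1
          have : lstar ^ (7:ℕ) = lstar ^ (3 + 3 : ℕ) * lstar := by ring
          rw [this, mul_comm (lstar ^ (3+3:ℕ)) lstar, mul_assoc,
            mul_inv_cancel₀ (by positivity), mul_one]
  -- Q σ = 0
  have hQσ : Q σ = 0 := by
    have hA0 : A ≠ 0 := ne_of_gt hIγpos
    have hK0 : K ≠ 0 := ne_of_gt hK
    rw [hQ σ, hAσ, hBσ]
    have hsplit : lstar ^ (3 * γ - 3 : ℝ) = lstar * lstar ^ (3 * γ - 4 : ℝ) := by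
      rw [show (3 * γ - 3 : ℝ) = 1 + (3 * γ - 4) by ring, Real.rpow_add hl0, Real.rpow_one]
    rw [hsplit, hlp]
    field_simp
    ring
  have hlS : lμ ≤ S σ := hlμ σ hσnn hQσ
  -- Bernoulli
  have hBer : lstar ^ (3 * γ - 3 : ℝ) ≤ 1 + (3 * γ - 3) * (lstar - 1) := by
    have := rpow_one_add_le_one_add_mul_self (s := lstar - 1)
      (by linarith) (p := 3 * γ - 3) (by linarith) (by linarith)
    simpa using this
  -- concavity step
  have hSσ : S σ = K / (γ - 1) * (lstar ^ (3 * γ - 3 : ℝ) * A) - (1/2) * (lstar * B)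
      - c * (∫ x, ρ x) := by
    rw [hS σ, hAσ, hBσ, hIσ]
  have hSρeq : S ρ = K / (γ - 1) * A - (1/2) * B - c * (∫ x, ρ x) := hS ρ
  have hQρeq : Q ρ = 3 * K * A - (1/2) * B := hQ ρ
  have hKA : (0:ℝ) < K / (γ - 1) * A := mul_pos (div_pos hK (by linarith)) hIγpos
  have key : S ρ + (lstar - 1) * Q ρ - S σ =
      K / (γ - 1) * A * (1 + (3 * γ - 3) * (lstar - 1) - lstar ^ (3 * γ - 3 : ℝ)) := by
    have hγne : γ - 1 ≠ 0 := by intro h; rw [sub_eq_zero] at h; linarith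
    rw [hSσ, hSρeq, hQρeq]
    field_simp
    ring
  have hge : 0 ≤ K / (γ - 1) * A * (1 + (3 * γ - 3) * (lstar - 1) - lstar ^ (3 * γ - 3 : ℝ)) :=
    mul_nonneg hKA.le (by linarith)
  refine ⟨hl1, ?_⟩
  rw [div_le_iff₀ (by linarith : (0:ℝ) < lstar - 1)]
  linarith [hlS, key, hge]
end
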